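/- Let 0 < k < 1 and set λ = √(1−k). Let f : [0,∞) → (0,∞) be a C² function satisfying f''(t)/f(t) = (1−k) + ε(t), where ε(t) → 0 as t → ∞, and suppose f(t) → 0 and f'(t) → 0 as t → ∞. Then for every δ ∈ (0, λ) there exist T > 0 and constants B > A > 0 such that for all t > T: A·e^{−(λ+δ)t} ≤ f(t) ≤ B·e^{−(λ−δ)t}, A·e^{−(λ+δ)t} ≤ −f'(t) ≤ B·e^{−(λ−δ)t}, and A·e^{−(λ+δ)t} ≤ f''(t) ≤ B·e^{−(λ−δ)t}. -/

import Mathlib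

open Real Filter

private lemma aux_hasderiv1 (f : ℝ → ℝ) (hfd : Differentiable ℝ f)
    (hfd' : Differentiable ℝ (deriv f)) (c lam t : ℝ) :
    HasDerivAt (fun s => (deriv f s + c * f s) * Real.exp (-(lam * s)))
      (((deriv (deriv f) t + c * deriv f t) - lam * (deriv f t + c * f t))
        * Real.exp (-(lam * t))) t := by
  have h1 : HasDerivAt (fun s => deriv f s + c * f s)
      (deriv (deriv f) t + c * deriv f t) t :=
    ((hfd' t).hasDerivAt).add (((hfd t).hasDerivAt).const_mul c)
  have hl : HasDerivAt (fun s : ℝ => -(lam * s)) (-lam) t := by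
    have := ((hasDerivAt_id t).const_mul lam).neg; simp only [id, mul_one] at this; exact this
  have h2 : HasDerivAt (fun s => Real.exp (-(lam * s)))
      (Real.exp (-(lam * t)) * (-lam)) t := hl.exp
  have := h1.mul h2
  refine this.congr_deriv ?_
  ring

private lemma aux_hasderiv2 (f : ℝ → ℝ) (hfd : Differentiable ℝ f) (μ t : ℝ) :
    HasDerivAt (fun s => f s * Real.exp (μ * s))
      ((deriv f t + μ * f t) * Real.exp (μ * t)) t := by
  have hl : HasDerivAt (fun s : ℝ => μ * s) μ t := by
    simpa using (hasDerivAt_id t).const_mul μ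
  have h2 : HasDerivAt (fun s => Real.exp (μ * s)) (Real.exp (μ * t) * μ) t := hl.exp
  have := ((hfd t).hasDerivAt).mul h2
  refine this.congr_deriv ?_
  ring

set_option maxHeartbeats 1000000 in
theorem constant_curvature_profile_decays_exponentially
    (k : ℝ) (hk : 0 < k) (hk1 : k < 1) (lam : ℝ) (hlam : lam = Real.sqrt (1 - k))
    (f eps : ℝ → ℝ) (hf : ContDiff ℝ 2 f) (hpos : ∀ t ≥ (0:ℝ), 0 < f t)
    (hode : ∀ t ≥ (0:ℝ), deriv (deriv f) t / f t = (1 - k) + eps t)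
    (heps : Tendsto eps atTop (nhds 0))
    (hf0 : Tendsto f atTop (nhds 0)) (hf'0 : Tendsto (deriv f) atTop (nhds 0)) :
    ∀ δ ∈ Set.Ioo (0:ℝ) lam, ∃ T > (0:ℝ), ∃ A B : ℝ, 0 < A ∧ A < B ∧
      ∀ t > T,
        (A * Real.exp (-(lam + δ) * t) ≤ f t ∧ f t ≤ B * Real.exp (-(lam - δ) * t)) ∧
        (A * Real.exp (-(lam + δ) * t) ≤ -deriv f t ∧
          -deriv f t ≤ B * Real.exp (-(lam - δ) * t)) ∧
        (A * Real.exp (-(lam + δ) * t) ≤ deriv (deriv f) t ∧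
          deriv (deriv f) t ≤ B * Real.exp (-(lam - δ) * t)) := by
  have h1k : (0:ℝ) < 1 - k := by linarith
  have hlam0 : 0 < lam := hlam ▸ Real.sqrt_pos.2 h1k
  have hlam2 : lam ^ 2 = 1 - k := by rw [hlam, sq_sqrt h1k.le]
  have hfd : Differentiable ℝ f := hf.differentiable (by norm_num)
  have hfd' : Differentiable ℝ (deriv f) := by
    have h : ContDiff ℝ ((1:ℕ∞)+1) f := by norm_num; exact hf
    exact (contDiff_succ_iff_deriv.mp h).2.2.differentiable (by norm_num)
  intro δ hδ
  obtain ⟨hδ0, hδlam⟩ := hδ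
  set η := lam * δ / 2 with hηdef
  have hη0 : 0 < η := by positivity
  have hηδ : η / lam = δ / 2 := by field_simp [hηdef]; ring
  have hηlam2 : η < lam ^ 2 / 2 := by nlinarith
  -- choose T0 with |eps| ≤ η beyond T0
  have hev : ∀ᶠ t in atTop, |eps t| ≤ η := by
    have := Metric.tendsto_nhds.mp heps η hη0
    filter_upwards [this] with t ht
    rw [Real.dist_eq, sub_zero] at ht
    exact ht.le
  obtain ⟨T0', hT0'⟩ := eventually_atTop.mp hev
  set T0 := max T0' 1 with hT0def
  have hT0pos : (0:ℝ) < T0 := lt_of_lt_of_le one_pos (le_max_right _ _)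
  have hT0eps : ∀ t ≥ T0, |eps t| ≤ η := fun t ht => hT0' t (le_trans (le_max_left _ _) ht)
  have hT0nn : ∀ t, T0 ≤ t → (0:ℝ) ≤ t := fun t ht => le_trans hT0pos.le ht
  -- the ODE in explicit form
  have hode' : ∀ t, T0 ≤ t → deriv (deriv f) t = (lam ^ 2 + eps t) * f t := by
    intro t ht
    have hft := hpos t (hT0nn t ht)
    have := hode t (hT0nn t ht)
    rw [div_eq_iff hft.ne'] at this
    rw [this, hlam2]
  -- f' is monotone on [T0, ∞) since f'' ≥ 0 there
  have hf''nn : ∀ t, T0 ≤ t → 0 ≤ deriv (deriv f) t := by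
    intro t ht
    rw [hode' t ht]
    have habs := hT0eps t ht
    have h1 : -η ≤ eps t := (abs_le.mp habs).1
    have hft := hpos t (hT0nn t ht)
    nlinarith
  have hf'mono : MonotoneOn (deriv f) (Set.Ici T0) := by
    apply monotoneOn_of_deriv_nonneg (convex_Ici T0) (hfd'.continuous.continuousOn)
      (hfd'.differentiableOn)
    intro x hx
    exact hf''nn x (le_of_lt (by simpa [interior_Ici] using hx))
  have hf'le : ∀ t, T0 ≤ t → deriv f t ≤ 0 := by
    intro t ht
    refine ge_of_tendsto hf'0 ?_
    refine eventually_atTop.mpr ⟨t, fun s hs => ?_⟩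
    exact hf'mono (Set.mem_Ici.mpr ht) (Set.mem_Ici.mpr (le_trans ht hs)) hs
  -- Gronwall-type bounds on f' + c f
  -- upper: f' ≤ -(lam - δ/2) f
  have hC1 : ∀ t, T0 ≤ t → deriv f t + (lam - δ/2) * f t ≤ 0 := by
    intro t ht
    set c := lam - δ/2 with hc
    set w := fun s => (deriv f s + c * f s) * Real.exp (-(lam * s)) with hw
    have hwmono : MonotoneOn w (Set.Ici T0) := by
      apply monotoneOn_of_deriv_nonneg (convex_Ici T0)
      · exact ((hfd'.continuous.add ((continuous_const.mul hfd.continuous : Continuous fun s => c * f s))).mul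
          (Real.continuous_exp.comp (continuous_const.mul continuous_id).neg)).continuousOn
      · exact fun x _ => (aux_hasderiv1 f hfd hfd' c lam x).differentiableAt.differentiableWithinAt
      · intro x hx
        have hx' : T0 ≤ x := le_of_lt (by simpa [interior_Ici] using hx)
        rw [(aux_hasderiv1 f hfd hfd' c lam x).deriv]
        have h1 : -η ≤ eps x := (abs_le.mp (hT0eps x hx')).1
        have hfx := hpos x (hT0nn x hx')
        have hfx' := hf'le x hx'
        have hode'' := hode' x hx'
        have hkey : 0 ≤ (deriv (deriv f) x + c * deriv f x) - lam * (deriv f x + c * f x) := by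
          rw [hode'']
          have : (lam ^ 2 + eps x) * f x + c * deriv f x - lam * (deriv f x + c * f x)
              = (eps x + lam * δ / 2) * f x - (δ/2) * deriv f x := by rw [hc]; ring
          rw [this]
          have h2 : 0 ≤ (eps x + lam * δ / 2) * f x := by
            apply mul_nonneg _ hfx.le
            rw [hηdef] at h1; linarith
          nlinarith
        exact mul_nonneg hkey (Real.exp_pos _).le
    have hwlim : Tendsto w atTop (nhds 0) := by
      have h1 : Tendsto (fun s => deriv f s + c * f s) atTop (nhds 0) := by
        have := hf'0.add (hf0.const_mul c)
        simpa using this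
      have h2 : Tendsto (fun s : ℝ => Real.exp (-(lam * s))) atTop (nhds 0) := by
        apply Real.tendsto_exp_neg_atTop_nhds_zero.comp
        exact Tendsto.const_mul_atTop hlam0 tendsto_id
      simpa using h1.mul h2
    have hwle : w t ≤ 0 := by
      refine ge_of_tendsto hwlim ?_
      refine eventually_atTop.mpr ⟨t, fun s hs => ?_⟩
      exact hwmono (Set.mem_Ici.mpr ht) (Set.mem_Ici.mpr (le_trans ht hs)) hs
    have hep : 0 < Real.exp (-(lam * t)) := Real.exp_pos _
    have : (deriv f t + c * f t) * Real.exp (-(lam * t)) ≤ 0 := hwle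
    nlinarith
  -- lower: f' ≥ -(lam + δ/2) f
  have hC2 : ∀ t, T0 ≤ t → 0 ≤ deriv f t + (lam + δ/2) * f t := by
    intro t ht
    set c := lam + δ/2 with hc
    set w := fun s => (deriv f s + c * f s) * Real.exp (-(lam * s)) with hw
    have hwmono : AntitoneOn w (Set.Ici T0) := by
      apply antitoneOn_of_deriv_nonpos (convex_Ici T0)
      · exact ((hfd'.continuous.add ((continuous_const.mul hfd.continuous : Continuous fun s => c * f s))).mul
          (Real.continuous_exp.comp (continuous_const.mul continuous_id).neg)).continuousOn
      · exact fun x _ => (aux_hasderiv1 f hfd hfd' c lam x).differentiableAt.differentiableWithinAt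
      · intro x hx
        have hx' : T0 ≤ x := le_of_lt (by simpa [interior_Ici] using hx)
        rw [(aux_hasderiv1 f hfd hfd' c lam x).deriv]
        have h1 : eps x ≤ η := (abs_le.mp (hT0eps x hx')).2
        have hfx := hpos x (hT0nn x hx')
        have hfx' := hf'le x hx'
        have hode'' := hode' x hx'
        have hkey : (deriv (deriv f) x + c * deriv f x) - lam * (deriv f x + c * f x) ≤ 0 := by
          rw [hode'']
          have : (lam ^ 2 + eps x) * f x + c * deriv f x - lam * (deriv f x + c * f x)
              = (eps x - lam * δ / 2) * f x + (δ/2) * deriv f x := by rw [hc]; ring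
          rw [this]
          have h2 : (eps x - lam * δ / 2) * f x ≤ 0 := by
            apply mul_nonpos_of_nonpos_of_nonneg _ hfx.le
            rw [hηdef] at h1; linarith
          nlinarith
        exact mul_nonpos_of_nonpos_of_nonneg hkey (Real.exp_pos _).le
    have hwlim : Tendsto w atTop (nhds 0) := by
      have h1 : Tendsto (fun s => deriv f s + c * f s) atTop (nhds 0) := by
        have := hf'0.add (hf0.const_mul c)
        simpa using this
      have h2 : Tendsto (fun s : ℝ => Real.exp (-(lam * s))) atTop (nhds 0) := by
        apply Real.tendsto_exp_neg_atTop_nhds_zero.comp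
        exact Tendsto.const_mul_atTop hlam0 tendsto_id
      simpa using h1.mul h2
    have hwge : 0 ≤ w t := by
      refine le_of_tendsto hwlim ?_
      refine eventually_atTop.mpr ⟨t, fun s hs => ?_⟩
      exact hwmono (Set.mem_Ici.mpr ht) (Set.mem_Ici.mpr (le_trans ht hs)) hs
    have hep : 0 < Real.exp (-(lam * t)) := Real.exp_pos _
    have : 0 ≤ (deriv f t + c * f t) * Real.exp (-(lam * t)) := hwge
    nlinarith
  -- exponential bounds on f via weighted monotonicity
  have hGmono : MonotoneOn (fun s => f s * Real.exp ((lam + δ) * s)) (Set.Ici T0) := by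
    apply monotoneOn_of_deriv_nonneg (convex_Ici T0)
    · exact (hfd.continuous.mul
        (Real.continuous_exp.comp (continuous_const.mul continuous_id))).continuousOn
    · exact fun x _ => (aux_hasderiv2 f hfd (lam + δ) x).differentiableAt.differentiableWithinAt
    · intro x hx
      have hx' : T0 ≤ x := le_of_lt (by simpa [interior_Ici] using hx)
      rw [(aux_hasderiv2 f hfd (lam + δ) x).deriv]
      have h2 := hC2 x hx'
      have hfx := hpos x (hT0nn x hx')
      have : 0 ≤ deriv f x + (lam + δ) * f x := by nlinarith
      exact mul_nonneg this (Real.exp_pos _).le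
  have hFanti : AntitoneOn (fun s => f s * Real.exp ((lam - δ) * s)) (Set.Ici T0) := by
    apply antitoneOn_of_deriv_nonpos (convex_Ici T0)
    · exact (hfd.continuous.mul
        (Real.continuous_exp.comp (continuous_const.mul continuous_id))).continuousOn
    · exact fun x _ => (aux_hasderiv2 f hfd (lam - δ) x).differentiableAt.differentiableWithinAt
    · intro x hx
      have hx' : T0 ≤ x := le_of_lt (by simpa [interior_Ici] using hx)
      rw [(aux_hasderiv2 f hfd (lam - δ) x).deriv]
      have h2 := hC1 x hx'
      have hfx := hpos x (hT0nn x hx')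
      have : deriv f x + (lam - δ) * f x ≤ 0 := by nlinarith
      exact mul_nonpos_of_nonpos_of_nonneg this (Real.exp_pos _).le
  -- constants
  set c1 := f T0 * Real.exp ((lam + δ) * T0) with hc1def
  set c2 := f T0 * Real.exp ((lam - δ) * T0) with hc2def
  have hfT0 := hpos T0 hT0pos.le
  have hc1pos : 0 < c1 := mul_pos hfT0 (Real.exp_pos _)
  have hc2pos : 0 < c2 := mul_pos hfT0 (Real.exp_pos _)
  set m := min 1 (min (lam - δ/2) (lam^2/2)) with hmdef
  set M := max 1 (max (lam + δ/2) (lam^2 + η)) with hMdef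
  have hm0 : 0 < m := by
    apply lt_min one_pos (lt_min (by linarith) (by positivity))
  have hm1 : m ≤ 1 := min_le_left _ _
  have hm2 : m ≤ lam - δ/2 := le_trans (min_le_right _ _) (min_le_left _ _)
  have hm3 : m ≤ lam^2/2 := le_trans (min_le_right _ _) (min_le_right _ _)
  have hM1 : 1 ≤ M := le_max_left _ _
  have hM2 : lam + δ/2 ≤ M := le_trans (le_max_left _ _) (le_max_right _ _)
  have hM3 : lam^2 + η ≤ M := le_trans (le_max_right _ _) (le_max_right _ _)
  refine ⟨T0, hT0pos, m * c1, M * c2 + m * c1, by positivity, by nlinarith, ?_⟩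
  intro t ht
  have ht' : T0 ≤ t := ht.le
  set Em := Real.exp (-(lam + δ) * t) with hEmdef
  set Ep := Real.exp (-(lam - δ) * t) with hEpdef
  have hEm : 0 < Em := Real.exp_pos _
  have hEp : 0 < Ep := Real.exp_pos _
  have hEmmul : Real.exp ((lam + δ) * t) * Em = 1 := by
    rw [hEmdef, ← Real.exp_add, show (lam + δ) * t + -(lam + δ) * t = 0 by ring, Real.exp_zero]
  have hEpmul : Real.exp ((lam - δ) * t) * Ep = 1 := by
    rw [hEpdef, ← Real.exp_add, show (lam - δ) * t + -(lam - δ) * t = 0 by ring, Real.exp_zero]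
  -- f bounds
  have hflow : c1 * Em ≤ f t := by
    have := hGmono (Set.mem_Ici.mpr (le_refl T0)) (Set.mem_Ici.mpr ht') ht'
    simp only at this
    nlinarith [Real.exp_pos ((lam + δ) * t)]
  have hfup : f t ≤ c2 * Ep := by
    have := hFanti (Set.mem_Ici.mpr (le_refl T0)) (Set.mem_Ici.mpr ht') ht'
    simp only at this
    nlinarith [Real.exp_pos ((lam - δ) * t)]
  have hft := hpos t (hT0nn t ht')
  have h1 := hC1 t ht'
  have h2 := hC2 t ht'
  have habs := abs_le.mp (hT0eps t ht')
  have hS := hode' t ht'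
  have hc1Em : (0:ℝ) < c1 * Em := by positivity
  have hc2Ep : (0:ℝ) < c2 * Ep := by positivity
  refine ⟨⟨?_, ?_⟩, ⟨?_, ?_⟩, ?_, ?_⟩
  · have ha : m * (c1 * Em) ≤ 1 * (c1 * Em) := mul_le_mul_of_nonneg_right hm1 hc1Em.le
    linarith
  · have ha : c2 * Ep ≤ M * c2 * Ep :=
      mul_le_mul_of_nonneg_right (le_mul_of_one_le_left hc2pos.le hM1) hEp.le
    have hb : (0:ℝ) ≤ m * c1 * Ep := by positivity
    linarith
  · have ha : m * (c1 * Em) ≤ (lam - δ/2) * (c1 * Em) :=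
      mul_le_mul_of_nonneg_right hm2 hc1Em.le
    have hb : (lam - δ/2) * (c1 * Em) ≤ (lam - δ/2) * f t :=
      mul_le_mul_of_nonneg_left hflow (by linarith)
    linarith
  · have ha : (lam + δ/2) * f t ≤ (lam + δ/2) * (c2 * Ep) :=
      mul_le_mul_of_nonneg_left hfup (by linarith)
    have hb : (lam + δ/2) * (c2 * Ep) ≤ M * (c2 * Ep) :=
      mul_le_mul_of_nonneg_right hM2 hc2Ep.le
    have hc : (0:ℝ) ≤ m * c1 * Ep := by positivity
    linarith
  · have hlow2 : lam ^ 2 / 2 ≤ lam ^ 2 + eps t := by linarith [habs.1]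
    have hSl : lam ^ 2 / 2 * f t ≤ deriv (deriv f) t := by
      rw [hS]; exact mul_le_mul_of_nonneg_right hlow2 hft.le
    have ha : m * (c1 * Em) ≤ lam ^ 2 / 2 * (c1 * Em) :=
      mul_le_mul_of_nonneg_right hm3 hc1Em.le
    have hb : lam ^ 2 / 2 * (c1 * Em) ≤ lam ^ 2 / 2 * f t :=
      mul_le_mul_of_nonneg_left hflow (by positivity)
    linarith
  · have hup2 : lam ^ 2 + eps t ≤ lam ^ 2 + η := by linarith [habs.2]
    have hSu : deriv (deriv f) t ≤ (lam ^ 2 + η) * f t := by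
      rw [hS]; exact mul_le_mul_of_nonneg_right hup2 hft.le
    have ha : (lam ^ 2 + η) * f t ≤ (lam ^ 2 + η) * (c2 * Ep) :=
      mul_le_mul_of_nonneg_left hfup (by positivity)
    have hb : (lam ^ 2 + η) * (c2 * Ep) ≤ M * (c2 * Ep) :=
      mul_le_mul_of_nonneg_right hM3 hc2Ep.le
    have hc : (0:ℝ) ≤ m * c1 * Ep := by positivity
    linarith
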